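/- Let G be a graph on X where every vertex has degree at least 2, and suppose the edge set of G is partitioned into paths p_0, p_1, ..., processed in an end-ordered fashion, each of length at least 4 and at most 2·4. Then there is a coloring c : X → {0,1} such that every vertex has at most one neighbor of the same color. In particular, any finite acyclic graph of minimum degree at least 2 whose edges decompose into end-ordered vertex-disjoint-within-levels paths of length at least 4 admits a strongly unfriendly 2-coloring. -/

import Mathlib

/-- A (simple) path in a graph `G`, packaged with its endpoints. -/
structure GPath {V : Type*} (G : SimpleGraph V) where
  a : V
  b : V
  walk : G.Walk a b
  isPath : walk.IsPath

namespace GPath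

variable {V : Type*} {G : SimpleGraph V}

def IsEndpoint (p : GPath G) (x : V) : Prop := x = p.a ∨ x = p.b

def Mem (p : GPath G) (x : V) : Prop := x ∈ p.walk.support

end GPath

/-- A path decomposition of a graph `G` (see the paper): each `P i` consists of
vertex-disjoint paths, the sequence is end-ordered, and every edge of `G`
appears in exactly one path among all the `P i`. -/
def IsPathDecomposition {V : Type*} (G : SimpleGraph V)
    (P : ℕ → Set (GPath G)) : Prop :=
  (∀ i, ∀ p ∈ P i, 1 ≤ p.walk.length) ∧
  (∀ i, ∀ p ∈ P i, ∀ q ∈ P i, p ≠ q → ∀ x, p.Mem x → ¬ q.Mem x) ∧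
  (∀ i j, i < j → ∀ p ∈ P i, ∀ q ∈ P j, ∀ x, p.Mem x → q.Mem x →
    q.IsEndpoint x) ∧
  (∀ e ∈ G.edgeSet, ∃! pr : ℕ × GPath G, pr.2 ∈ P pr.1 ∧ e ∈ pr.2.walk.edges)

namespace SUaux

open SimpleGraph
open scoped Classical

variable {V : Type*} {G : SimpleGraph V}

/-! ### The finite pattern -/

/-- The color pattern along a path of length `m` with endpoint colors `b0`, `bm`:
alternate from the left up to position 2, alternate from the right afterwards. -/
def pat (m k : ℕ) (b0 bm : Bool) : Bool :=
  if k ≤ 2 then xor b0 (decide (k % 2 = 1)) else xor bm (decide ((m - k) % 2 = 1))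

lemma pat_zero {m : ℕ} {b0 bm : Bool} : pat m 0 b0 bm = b0 := by simp [pat]

lemma pat_one {m : ℕ} {b0 bm : Bool} : pat m 1 b0 bm = !b0 := by simp [pat]

lemma pat_last {m : ℕ} (h : 2 < m) {b0 bm : Bool} : pat m m b0 bm = bm := by
  rw [pat, if_neg (by omega)]
  simp

lemma pat_pred_last {m : ℕ} (h : 4 ≤ m) {b0 bm : Bool} : pat m (m - 1) b0 bm = !bm := by
  rw [pat, if_neg (by omega)]
  have h1 : m - (m - 1) = 1 := by omega
  rw [h1]
  simp

lemma pat_mid {m k : ℕ} (hm : 4 ≤ m) (hm' : m ≤ 8) (hk : 0 < k) (hk' : k < m)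
    (b0 bm : Bool)
    (h1 : pat m (k - 1) b0 bm = pat m k b0 bm)
    (h2 : pat m (k + 1) b0 bm = pat m k b0 bm) : False := by
  revert h1 h2
  interval_cases m <;> interval_cases k <;> revert b0 bm <;> decide

/-! ### Walk lemmas -/

lemma getVert_mem_support {u v : V} (w : G.Walk u v) {k : ℕ} (hk : k ≤ w.length) :
    w.getVert k ∈ w.support :=
  Walk.mem_support_iff_exists_getVert.mpr ⟨k, rfl, hk⟩

lemma getVert_inj {u v : V} {w : G.Walk u v} (hw : w.IsPath) :
    ∀ {k l : ℕ}, k ≤ w.length → l ≤ w.length → w.getVert k = w.getVert l → k = l := by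
  induction w with
  | nil => intro k l hk hl _; simp [Walk.length_nil] at hk hl; omega
  | @cons u v' v'' hadj q ih =>
    rw [Walk.cons_isPath_iff] at hw
    intro k l hk hl he
    match k, l with
    | 0, 0 => rfl
    | 0, l + 1 =>
      exfalso
      rw [Walk.getVert_zero, Walk.getVert_cons_succ] at he
      refine hw.2 ?_
      rw [he]
      exact getVert_mem_support q (by simpa [Walk.length_cons] using hl)
    | k + 1, 0 =>
      exfalso
      rw [Walk.getVert_zero, Walk.getVert_cons_succ] at he
      refine hw.2 ?_
      rw [← he]
      exact getVert_mem_support q (by simpa [Walk.length_cons] using hk)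
    | k + 1, l + 1 =>
      rw [Walk.getVert_cons_succ, Walk.getVert_cons_succ] at he
      have := ih hw.1 (by simpa [Walk.length_cons] using hk)
        (by simpa [Walk.length_cons] using hl) he
      omega

lemma edge_getVert {u v x y : V} {w : G.Walk u v} (h : s(x, y) ∈ w.edges) :
    ∃ k, k < w.length ∧ ((w.getVert k = x ∧ w.getVert (k + 1) = y) ∨
      (w.getVert k = y ∧ w.getVert (k + 1) = x)) := by
  induction w with
  | nil => simp at h
  | @cons u v' v'' hadj q ih =>
    rw [Walk.edges_cons, List.mem_cons] at h
    rcases h with h | h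
    · refine ⟨0, by simp [Walk.length_cons], ?_⟩
      have h0 : (q.cons hadj).getVert 0 = u := Walk.getVert_zero _
      have h1 : (q.cons hadj).getVert 1 = v' := by rw [Walk.getVert_cons_succ, Walk.getVert_zero]
      rw [Sym2.eq_iff] at h
      rcases h with ⟨hx, hy⟩ | ⟨hx, hy⟩
      · exact Or.inl ⟨by rw [h0, hx], by rw [h1, hy]⟩
      · exact Or.inr ⟨by rw [h0, hy], by rw [h1, hx]⟩
    · obtain ⟨k, hk, hcase⟩ := ih h
      refine ⟨k + 1, by simp [Walk.length_cons]; omega, ?_⟩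
      simpa [Walk.getVert_cons_succ] using hcase

lemma mem_getVert {p : GPath G} {k : ℕ} (hk : k ≤ p.walk.length) :
    p.Mem (p.walk.getVert k) :=
  getVert_mem_support _ hk

/-! ### The level and index functions, and the coloring -/

/-- The first level at which `x` occurs in a path. -/
noncomputable def lvl (P : ℕ → Set (GPath G)) (x : V) : ℕ :=
  if h : ∃ i, ∃ p ∈ P i, p.Mem x then Nat.find h else 0

lemma lvl_le {P : ℕ → Set (GPath G)} {i : ℕ} {p : GPath G} {x : V}
    (hp : p ∈ P i) (hx : p.Mem x) : lvl P x ≤ i := by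
  have h : ∃ i, ∃ p ∈ P i, p.Mem x := ⟨i, p, hp, hx⟩
  simp only [lvl, dif_pos h]
  exact Nat.find_le ⟨p, hp, hx⟩

lemma lvl_mem {P : ℕ → Set (GPath G)} {x : V} (h : ∃ i, ∃ p ∈ P i, p.Mem x) :
    ∃ p ∈ P (lvl P x), p.Mem x := by
  simp only [lvl, dif_pos h]
  exact Nat.find_spec h

/-- The position of `x` in a path `p`. -/
noncomputable def idx (p : GPath G) (x : V) : ℕ :=
  if h : ∃ k, k ≤ p.walk.length ∧ p.walk.getVert k = x then Nat.find h else 0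

lemma idx_eq {p : GPath G} {x : V} {k : ℕ} (hk : k ≤ p.walk.length)
    (hx : p.walk.getVert k = x) : idx p x = k := by
  have h : ∃ k, k ≤ p.walk.length ∧ p.walk.getVert k = x := ⟨k, hk, hx⟩
  simp only [idx, dif_pos h]
  have hs := Nat.find_spec h
  exact getVert_inj p.isPath hs.1 hk (hs.2.trans hx.symm)

/-- The coloring at level `i`. -/
noncomputable def Fcol (P : ℕ → Set (GPath G)) (i : ℕ) (x : V) : Bool :=
  if h : ∃ p ∈ P i, p.Mem x then
    pat (Classical.choose h).walk.length (idx (Classical.choose h) x)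
      (if h0 : lvl P (Classical.choose h).a < i then
        Fcol P (lvl P (Classical.choose h).a) (Classical.choose h).a else false)
      (if h1 : lvl P (Classical.choose h).b < i then
        Fcol P (lvl P (Classical.choose h).b) (Classical.choose h).b else false)
  else false
termination_by i
decreasing_by
  · exact h0
  · exact h1

/-- The boundary color used for an endpoint at level `i`. -/
noncomputable def endB (P : ℕ → Set (GPath G)) (i : ℕ) (y : V) : Bool :=
  if lvl P y < i then Fcol P (lvl P y) y else false

/-- The final coloring. -/
noncomputable def col (P : ℕ → Set (GPath G)) (x : V) : Bool := Fcol P (lvl P x) x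

lemma Fcol_eq_of_mem {P : ℕ → Set (GPath G)}
    (hdisj : ∀ i, ∀ p ∈ P i, ∀ q ∈ P i, p ≠ q → ∀ x, p.Mem x → ¬ q.Mem x)
    {i : ℕ} {p : GPath G} {x : V} (hp : p ∈ P i) (hx : p.Mem x) :
    Fcol P i x = pat p.walk.length (idx p x) (endB P i p.a) (endB P i p.b) := by
  rw [Fcol]
  have h : ∃ q ∈ P i, q.Mem x := ⟨p, hp, hx⟩
  rw [dif_pos h]
  have hq := Classical.choose_spec h
  have hqp : Classical.choose h = p := by
    by_contra hne
    exact hdisj i _ hq.1 p hp hne x hq.2 hx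
  rw [hqp]
  rfl

lemma endB_eq_a {P : ℕ → Set (GPath G)}
    (hdisj : ∀ i, ∀ p ∈ P i, ∀ q ∈ P i, p ≠ q → ∀ x, p.Mem x → ¬ q.Mem x)
    {i : ℕ} {p : GPath G} (hp : p ∈ P i) : endB P i p.a = col P p.a := by
  have hmem : p.Mem p.a := p.walk.start_mem_support
  rcases (lvl_le hp hmem).lt_or_eq with h | h
  · rw [endB, if_pos h, col]
  · have hc : col P p.a = false := by
      rw [col, h, Fcol_eq_of_mem hdisj hp hmem,
        idx_eq (Nat.zero_le _) p.walk.getVert_zero, pat_zero, endB,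
        if_neg (by omega)]
    rw [endB, if_neg (by omega), hc]

lemma endB_eq_b {P : ℕ → Set (GPath G)}
    (hdisj : ∀ i, ∀ p ∈ P i, ∀ q ∈ P i, p ≠ q → ∀ x, p.Mem x → ¬ q.Mem x)
    {i : ℕ} {p : GPath G} (hlen4 : 4 ≤ p.walk.length) (hp : p ∈ P i) :
    endB P i p.b = col P p.b := by
  have hmem : p.Mem p.b := p.walk.end_mem_support
  rcases (lvl_le hp hmem).lt_or_eq with h | h
  · rw [endB, if_pos h, col]
  · have hc : col P p.b = false := by
      rw [col, h, Fcol_eq_of_mem hdisj hp hmem,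
        idx_eq (le_refl _) p.walk.getVert_length, pat_last (by omega), endB,
        if_neg (by omega)]
    rw [endB, if_neg (by omega), hc]

lemma col_getVert {P : ℕ → Set (GPath G)}
    (hdisj : ∀ i, ∀ p ∈ P i, ∀ q ∈ P i, p ≠ q → ∀ x, p.Mem x → ¬ q.Mem x)
    (hend : ∀ i j, i < j → ∀ p ∈ P i, ∀ q ∈ P j, ∀ x, p.Mem x → q.Mem x →
      q.IsEndpoint x)
    {i : ℕ} {p : GPath G} (hlen4 : 4 ≤ p.walk.length) (hp : p ∈ P i)
    {k : ℕ} (hk : k ≤ p.walk.length) :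
    col P (p.walk.getVert k) = pat p.walk.length k (col P p.a) (col P p.b) := by
  have hmem : p.Mem (p.walk.getVert k) := mem_getVert hk
  rcases (lvl_le hp hmem).lt_or_eq with hlt | heq
  · obtain ⟨q, hq, hxq⟩ := lvl_mem ⟨i, p, hp, hmem⟩
    rcases hend _ _ hlt q hq p hp _ hxq hmem with h | h
    · -- getVert k = p.a
      have hk0 : k = 0 := getVert_inj p.isPath hk (Nat.zero_le _)
        (by rw [p.walk.getVert_zero]; exact h)
      subst hk0
      rw [pat_zero, p.walk.getVert_zero]
    · have hkm : k = p.walk.length := getVert_inj p.isPath hk (le_refl _)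
        (by rw [p.walk.getVert_length]; exact h)
      subst hkm
      rw [pat_last (by omega), p.walk.getVert_length]
  · rw [col, heq, Fcol_eq_of_mem hdisj hp hmem, idx_eq hk rfl,
      endB_eq_a hdisj hp, endB_eq_b hdisj hlen4 hp]

end SUaux

/-- Let `G` be a graph in which every vertex has degree at
least `2`, and suppose the edge set of `G` is partitioned into end-ordered
paths, each of length at least `4` and at most `2·4 = 8`. Then there is a
`2`-coloring `c` of the vertices such that every vertex has at most one
neighbor of the same color (a strongly unfriendly coloring). -/
theorem path_decomposition_strongly_unfriendly {V : Type*}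
    (G : SimpleGraph V) (hdeg : ∀ v : V, 2 ≤ (G.neighborSet v).ncard)
    (P : ℕ → Set (GPath G)) (hP : IsPathDecomposition G P)
    (hlen : ∀ i, ∀ p ∈ P i, 4 ≤ p.walk.length ∧ p.walk.length ≤ 2 * 4) :
    ∃ c : V → Bool, ∀ x : V, {y : V | G.Adj x y ∧ c y = c x}.Subsingleton := by
  classical
  obtain ⟨-, hdisj, hend, huniq⟩ := hP
  open SUaux in
  refine ⟨SUaux.col P, ?_⟩
  intro x
  have key : ∀ y : V, G.Adj x y → SUaux.col P y = SUaux.col P x →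
      ∃ i p k, p ∈ P i ∧ 0 < k ∧ k < p.walk.length ∧ p.walk.getVert k = x ∧
        (y = p.walk.getVert (k + 1) ∨ y = p.walk.getVert (k - 1)) := by
    intro y hadj hcol
    obtain ⟨⟨i, p⟩, ⟨hpi, he⟩, -⟩ := huniq s(x, y) (G.mem_edgeSet.mpr hadj)
    dsimp only at hpi he
    obtain ⟨j, hj, hc⟩ := SUaux.edge_getVert he
    have hm4 : 4 ≤ p.walk.length := (hlen i p hpi).1
    rcases hc with ⟨hjx, hjy⟩ | ⟨hjy, hjx⟩
    · rcases Nat.eq_zero_or_pos j with h0 | h0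
      · exfalso
        subst h0
        have h1 : SUaux.col P y =
            SUaux.pat p.walk.length 1 (SUaux.col P p.a) (SUaux.col P p.b) := by
          rw [← hjy]; exact SUaux.col_getVert hdisj hend hm4 hpi (by omega)
        have h2 : SUaux.col P x =
            SUaux.pat p.walk.length 0 (SUaux.col P p.a) (SUaux.col P p.b) := by
          rw [← hjx]; exact SUaux.col_getVert hdisj hend hm4 hpi (by omega)
        rw [SUaux.pat_one] at h1
        rw [SUaux.pat_zero] at h2
        rw [hcol, h2] at h1
        simp at h1
      · exact ⟨i, p, j, hpi, h0, hj, hjx, Or.inl hjy.symm⟩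
    · rcases eq_or_lt_of_le (show j + 1 ≤ p.walk.length by omega) with hEnd | hlt
      · exfalso
        have h1 : SUaux.col P y =
            SUaux.pat p.walk.length j (SUaux.col P p.a) (SUaux.col P p.b) := by
          rw [← hjy]; exact SUaux.col_getVert hdisj hend hm4 hpi (le_of_lt hj)
        have h2 : SUaux.col P x =
            SUaux.pat p.walk.length (j + 1) (SUaux.col P p.a) (SUaux.col P p.b) := by
          rw [← hjx]; exact SUaux.col_getVert hdisj hend hm4 hpi (by omega)
        have hje : j = p.walk.length - 1 := by omega
        rw [hje, SUaux.pat_pred_last hm4] at h1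
        rw [hEnd, SUaux.pat_last (by omega)] at h2
        rw [hcol, h2] at h1
        simp at h1
      · exact ⟨i, p, j + 1, hpi, by omega, hlt, hjx, Or.inr (by simpa using hjy.symm)⟩
  intro y hy z hz
  obtain ⟨i, p, k, hpi, hk0, hkm, hkx, hky⟩ := key y hy.1 hy.2
  obtain ⟨j, q, l, hqj, hl0, hlm, hlx, hlz⟩ := key z hz.1 hz.2
  have hmemp : p.Mem x := by rw [← hkx]; exact SUaux.mem_getVert (le_of_lt hkm)
  have hmemq : q.Mem x := by rw [← hlx]; exact SUaux.mem_getVert (le_of_lt hlm)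
  have hqp : q = p := by
    rcases lt_trichotomy i j with h | h | h
    · exfalso
      rcases hend i j h p hpi q hqj x hmemp hmemq with hxa | hxb
      · have : l = 0 := SUaux.getVert_inj q.isPath (le_of_lt hlm) (Nat.zero_le _)
          (by rw [q.walk.getVert_zero, hlx]; exact hxa)
        omega
      · have : l = q.walk.length := SUaux.getVert_inj q.isPath (le_of_lt hlm)
          (le_refl _) (by rw [q.walk.getVert_length, hlx]; exact hxb)
        omega
    · subst h
      by_contra hne
      exact hdisj i q hqj p hpi hne x hmemq hmemp
    · exfalso
      rcases hend j i h q hqj p hpi x hmemq hmemp with hxa | hxb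
      · have : k = 0 := SUaux.getVert_inj p.isPath (le_of_lt hkm) (Nat.zero_le _)
          (by rw [p.walk.getVert_zero, hkx]; exact hxa)
        omega
      · have : k = p.walk.length := SUaux.getVert_inj p.isPath (le_of_lt hkm)
          (le_refl _) (by rw [p.walk.getVert_length, hkx]; exact hxb)
        omega
  subst hqp
  have hlk : l = k := SUaux.getVert_inj q.isPath (le_of_lt hlm) (le_of_lt hkm)
    (hlx.trans hkx.symm)
  subst hlk
  have hm4 : 4 ≤ q.walk.length := (hlen i q hpi).1
  have hm8 : q.walk.length ≤ 8 := by
    have := (hlen i q hpi).2; omega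
  have hcx : SUaux.col P x =
      SUaux.pat q.walk.length l (SUaux.col P q.a) (SUaux.col P q.b) := by
    rw [← hkx]; exact SUaux.col_getVert hdisj hend hm4 hpi (le_of_lt hkm)
  have hsucc : SUaux.col P (q.walk.getVert (l + 1)) =
      SUaux.pat q.walk.length (l + 1) (SUaux.col P q.a) (SUaux.col P q.b) :=
    SUaux.col_getVert hdisj hend hm4 hpi (by omega)
  have hpred : SUaux.col P (q.walk.getVert (l - 1)) =
      SUaux.pat q.walk.length (l - 1) (SUaux.col P q.a) (SUaux.col P q.b) :=
    SUaux.col_getVert hdisj hend hm4 hpi (by omega)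
  rcases hky with h1 | h1 <;> rcases hlz with h2 | h2
  · rw [h1, h2]
  · exfalso
    refine SUaux.pat_mid hm4 hm8 hl0 hlm (SUaux.col P q.a) (SUaux.col P q.b) ?_ ?_
    · rw [← hpred, ← hcx, ← h2]; exact hz.2
    · rw [← hsucc, ← hcx, ← h1]; exact hy.2
  · exfalso
    refine SUaux.pat_mid hm4 hm8 hl0 hlm (SUaux.col P q.a) (SUaux.col P q.b) ?_ ?_
    · rw [← hpred, ← hcx, ← h1]; exact hy.2
    · rw [← hsucc, ← hcx, ← h2]; exact hz.2
  · rw [h1, h2]
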